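/- There exists a real constant C > 0 such that for all natural numbers n ≥ 2, n · (Real.log n)^(Real.log 2) ≤ C · (the number of additive subgroups Δ of ℝ with c(ℤ, Δ) ≤ ⌈C · n⌉), where ℤ denotes the additive subgroup of ℝ generated by 1. -/

import Mathlib

open AddSubgroup Finset

/-- The commensurability index of two additive subgroups `A`, `B`:
`c(A,B) = [A : A ⊓ B] * [B : A ⊓ B]`. Following Mathlib's convention for
`AddSubgroup.relindex`, a value of `0` means the index is infinite. -/
noncomputable def addCommIndex {G : Type*} [AddGroup G] (A B : AddSubgroup G) : ℕ :=
  (A ⊓ B).relIndex A * (A ⊓ B).relIndex B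

namespace CommGrowthAux

/-! ### Algebraic lemmas about `zmultiples` in `ℝ` -/

lemma mem_zmul_iff {x b : ℝ} : b ∈ zmultiples x ↔ ∃ n : ℤ, (n : ℝ) * x = b := by
  rw [mem_zmultiples_iff]
  simp [zsmul_eq_mul]

lemma range_zmulHom (x : ℝ) : (zmultiplesHom ℝ x : ℤ →+ ℝ).range = zmultiples x := by
  ext b
  simp [AddMonoidHom.mem_range, mem_zmultiples_iff, zmultiplesHom_apply]

lemma cyclic_le {x : ℝ} (Δ : AddSubgroup ℝ) (h : Δ ≤ zmultiples x) :
    ∃ k : ℕ, Δ = zmultiples ((k : ℝ) * x) := by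
  set f := (zmultiplesHom ℝ x : ℤ →+ ℝ) with hf
  have hr : f.range = zmultiples x := range_zmulHom x
  have h2 : (Δ.comap f).map f = Δ := AddSubgroup.map_comap_eq_self (by rw [hr]; exact h)
  obtain ⟨a, ha⟩ := Int.subgroup_cyclic (Δ.comap f)
  have ha' : Δ.comap f = zmultiples a := by rw [ha, zmultiples_eq_closure]
  have hΔ : Δ = zmultiples ((a : ℝ) * x) := by
    rw [← h2, ha', AddMonoidHom.map_zmultiples]
    congr 1
    simp [hf, zmultiplesHom_apply, zsmul_eq_mul]
  refine ⟨a.natAbs, ?_⟩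
  rw [hΔ, Nat.cast_natAbs, Int.cast_abs]
  rcases abs_cases ((a : ℝ)) with ⟨h1, _⟩ | ⟨h1, _⟩ <;> rw [h1]
  rw [neg_mul, zmultiples_neg]

lemma comap_zmul {x : ℝ} (hx : x ≠ 0) (k : ℕ) :
    (zmultiples ((k : ℝ) * x)).comap (zmultiplesHom ℝ x : ℤ →+ ℝ) = zmultiples (k : ℤ) := by
  ext n
  simp only [AddSubgroup.mem_comap, zmultiplesHom_apply, zsmul_eq_mul, mem_zmul_iff,
    mem_zmultiples_iff, smul_eq_mul]
  constructor
  · rintro ⟨j, hj⟩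
    refine ⟨j, ?_⟩
    have : ((j * (k:ℤ) : ℤ) : ℝ) = ((n : ℤ) : ℝ) := by
      push_cast
      have := mul_right_cancel₀ hx (by rw [← hj]; ring : (j : ℝ) * (k : ℝ) * x = (n : ℝ) * x)
      exact this
    exact_mod_cast this
  · rintro ⟨j, hj⟩
    refine ⟨j, ?_⟩
    have : ((j * (k:ℤ) : ℤ) : ℝ) = (n : ℝ) := by exact_mod_cast congrArg (fun z : ℤ => (z : ℝ)) hj
    push_cast at this
    rw [← this]; ring

lemma relindex_zmul {x : ℝ} (hx : x ≠ 0) (k : ℕ) :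
    (zmultiples ((k : ℝ) * x)).relIndex (zmultiples x) = k := by
  set f := (zmultiplesHom ℝ x : ℤ →+ ℝ) with hf
  have h1 : zmultiples x = (⊤ : AddSubgroup ℤ).map f := by
    rw [← range_zmulHom x, AddMonoidHom.range_eq_map]
  rw [h1, ← AddSubgroup.relIndex_comap, comap_zmul hx k, relIndex_top_right,
    Int.index_zmultiples]
  exact Int.natAbs_natCast k

lemma inf_zmul {p q : ℕ} (hp : p ≠ 0) (hq : q ≠ 0) (hco : Nat.Coprime p q) :
    zmultiples (1 : ℝ) ⊓ zmultiples ((p : ℝ) / (q : ℝ)) = zmultiples ((p : ℝ)) := by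
  have hq0 : (q : ℝ) ≠ 0 := Nat.cast_ne_zero.2 hq
  ext x
  simp only [AddSubgroup.mem_inf, mem_zmul_iff]
  constructor
  · rintro ⟨⟨a, ha⟩, ⟨b, hb⟩⟩
    rw [mul_one] at ha
    have hreal : (a : ℝ) * q = (b : ℝ) * p := by
      have : (b : ℝ) * ((p : ℝ) / q) = (a : ℝ) := by rw [hb, ha]
      field_simp at this
      linarith [this]
    have hint : a * (q : ℤ) = b * (p : ℤ) := by exact_mod_cast hreal
    have hcop : IsCoprime (p : ℤ) (q : ℤ) := by
      rw [Int.isCoprime_iff_gcd_eq_one]; exact_mod_cast hco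
    have hdvd : (p : ℤ) ∣ a := by
      refine hcop.dvd_of_dvd_mul_right ⟨b, ?_⟩
      rw [hint]; ring
    obtain ⟨c, hc⟩ := hdvd
    refine ⟨c, ?_⟩
    rw [← ha]
    have : ((a : ℤ) : ℝ) = (((p : ℤ) * c : ℤ) : ℝ) := by exact_mod_cast congrArg (fun z : ℤ => (z : ℝ)) hc
    push_cast at this
    rw [this]; ring
  · rintro ⟨c, hc⟩
    refine ⟨⟨c * p, ?_⟩, ⟨c * q, ?_⟩⟩
    · push_cast; rw [← hc]; ring
    · push_cast; rw [← hc]; field_simp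

lemma addCommIndex_frac {p q : ℕ} (hp : p ≠ 0) (hq : q ≠ 0) (hco : Nat.Coprime p q) :
    addCommIndex (zmultiples (1 : ℝ)) (zmultiples ((p : ℝ) / (q : ℝ))) = p * q := by
  have hq0 : (q : ℝ) ≠ 0 := Nat.cast_ne_zero.2 hq
  have hp0 : (p : ℝ) ≠ 0 := Nat.cast_ne_zero.2 hp
  unfold addCommIndex
  rw [inf_zmul hp hq hco]
  have h1 : (zmultiples ((p : ℝ))).relIndex (zmultiples (1 : ℝ)) = p := by
    have := relindex_zmul (one_ne_zero : (1:ℝ) ≠ 0) p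
    rwa [mul_one] at this
  have h2 : (zmultiples ((p : ℝ))).relIndex (zmultiples ((p : ℝ) / q)) = q := by
    have hx : (p : ℝ) / q ≠ 0 := div_ne_zero hp0 hq0
    have := relindex_zmul hx q
    rwa [show (q : ℝ) * ((p : ℝ) / q) = (p : ℝ) by field_simp] at this
  rw [h1, h2]

lemma zmultiples_inj {a b : ℝ} (ha : 0 < a) (hb : 0 < b)
    (h : zmultiples a = zmultiples b) : a = b := by
  have h1 : a ∈ zmultiples b := h ▸ mem_zmultiples a
  have h2 : b ∈ zmultiples a := h.symm ▸ mem_zmultiples b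
  obtain ⟨s, hs⟩ := mem_zmul_iff.1 h1
  obtain ⟨t, ht⟩ := mem_zmul_iff.1 h2
  have hs0 : (0:ℝ) < s := by
    by_contra hcon
    push_neg at hcon
    nlinarith
  have hs1 : (1:ℤ) ≤ s := by exact_mod_cast hs0
  have ht0 : (0:ℝ) < t := by
    by_contra hcon
    push_neg at hcon
    nlinarith
  have ht1 : (1:ℤ) ≤ t := by exact_mod_cast ht0
  have hs1' : (1:ℝ) ≤ (s:ℝ) := by exact_mod_cast hs1
  have ht1' : (1:ℝ) ≤ (t:ℝ) := by exact_mod_cast ht1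
  nlinarith

lemma frac_inj {p q p' q' : ℕ} (hp : p ≠ 0) (hq : q ≠ 0) (hp' : p' ≠ 0) (hq' : q' ≠ 0)
    (hco : Nat.Coprime p q) (hco' : Nat.Coprime p' q')
    (h : zmultiples ((p : ℝ) / q) = zmultiples ((p' : ℝ) / q')) : p = p' ∧ q = q' := by
  have h0 : (0:ℝ) < (p : ℝ) / q := by
    apply div_pos <;> [exact_mod_cast Nat.pos_of_ne_zero hp; exact_mod_cast Nat.pos_of_ne_zero hq]
  have h0' : (0:ℝ) < (p' : ℝ) / q' := by
    apply div_pos <;> [exact_mod_cast Nat.pos_of_ne_zero hp'; exact_mod_cast Nat.pos_of_ne_zero hq']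
  have heq : (p : ℝ) / q = (p' : ℝ) / q' := zmultiples_inj h0 h0' h
  have hq0 : (q : ℝ) ≠ 0 := Nat.cast_ne_zero.2 hq
  have hq0' : (q' : ℝ) ≠ 0 := Nat.cast_ne_zero.2 hq'
  have hmul : (p : ℝ) * q' = (p' : ℝ) * q := by field_simp at heq; linarith
  have hnat : p * q' = p' * q := by exact_mod_cast hmul
  have hpp' : p = p' := by
    have d1 : p ∣ p' := by
      have : p ∣ p' * q := ⟨q', hnat.symm⟩
      exact hco.dvd_of_dvd_mul_right this
    have d2 : p' ∣ p := by
      have : p' ∣ p * q' := ⟨q, hnat⟩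
      exact hco'.dvd_of_dvd_mul_right this
    exact Nat.dvd_antisymm d1 d2
  subst hpp'
  refine ⟨rfl, ?_⟩
  have := Nat.eq_of_mul_eq_mul_left (Nat.pos_of_ne_zero hp) hnat
  omega

instance : Infinite (zmultiples (1 : ℝ)) := by
  apply Infinite.of_injective (fun n : ℤ => (⟨(n : ℝ), mem_zmul_iff.2 ⟨n, by rw [mul_one]⟩⟩ :
    zmultiples (1 : ℝ)))
  intro a b hab
  have : ((a : ℤ) : ℝ) = ((b : ℤ) : ℝ) := congrArg Subtype.val hab
  exact_mod_cast this

lemma setS_finite (m : ℕ) :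
    {Δ : AddSubgroup ℝ | addCommIndex (zmultiples (1 : ℝ)) Δ ≠ 0 ∧
      addCommIndex (zmultiples (1 : ℝ)) Δ ≤ m}.Finite := by
  have hfin : ((Set.Iic m ×ˢ (Set.Iic m ×ˢ Set.Iic m)) : Set (ℕ × ℕ × ℕ)).Finite :=
    (Set.finite_Iic m).prod ((Set.finite_Iic m).prod (Set.finite_Iic m))
  apply Set.Finite.subset (hfin.image
    (fun z : ℕ × ℕ × ℕ => zmultiples ((z.2.2 : ℝ) * ((z.1 : ℝ) / (z.2.1 : ℝ)))))
  rintro Δ ⟨hne, hle⟩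
  set H := zmultiples (1 : ℝ) ⊓ Δ with hHdef
  have hne1 : H.relIndex (zmultiples (1 : ℝ)) ≠ 0 := fun h => hne (by unfold addCommIndex; rw [← hHdef, h]; ring)
  have hne2 : H.relIndex Δ ≠ 0 := fun h => hne (by unfold addCommIndex; rw [← hHdef, h]; ring)
  obtain ⟨k, hk⟩ := cyclic_le H (inf_le_left : H ≤ zmultiples (1:ℝ))
  rw [mul_one] at hk
  have hk0 : k ≠ 0 := by
    rintro rfl
    rw [Nat.cast_zero, zmultiples_zero_eq_bot] at hk
    apply hne1
    rw [hk, relIndex_bot_left]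
    exact Nat.card_eq_zero_of_infinite
  have hkval : H.relIndex (zmultiples (1 : ℝ)) = k := by
    have := relindex_zmul (one_ne_zero : (1:ℝ) ≠ 0) k
    rw [mul_one] at this
    rw [hk, this]
  set q' := H.relIndex Δ with hq'def
  have hbound : k * q' ≤ m := by
    have : addCommIndex (zmultiples (1 : ℝ)) Δ = k * q' := by
      unfold addCommIndex; rw [← hHdef, hkval, hq'def]
    omega
  have hq'0 : q' ≠ 0 := hne2
  have hkm : k ≤ m := le_trans (Nat.le_mul_of_pos_right k (Nat.pos_of_ne_zero hq'0)) hbound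
  have hq'm : q' ≤ m := le_trans (Nat.le_mul_of_pos_left q' (Nat.pos_of_ne_zero hk0)) hbound
  have hk0' : (k : ℝ) ≠ 0 := Nat.cast_ne_zero.2 hk0
  have hq0' : (q' : ℝ) ≠ 0 := Nat.cast_ne_zero.2 hq'0
  have hsub : Δ ≤ zmultiples ((k : ℝ) / (q' : ℝ)) := by
    intro x hx
    have hmem : (q' : ℕ) • (⟨x, hx⟩ : Δ) ∈ H.addSubgroupOf Δ :=
      AddSubgroup.nsmul_index_mem (H.addSubgroupOf Δ) (⟨x, hx⟩ : Δ)
    have hmem' : (q' : ℕ) • x ∈ H := hmem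
    rw [hk] at hmem'
    obtain ⟨a, ha⟩ := mem_zmul_iff.1 hmem'
    rw [nsmul_eq_mul] at ha
    refine mem_zmul_iff.2 ⟨a, ?_⟩
    field_simp
    rw [ha]
  obtain ⟨t, ht⟩ := cyclic_le Δ hsub
  have hkH : (k : ℝ) ∈ H := by rw [hk]; exact mem_zmultiples _
  have hkΔ : (k : ℝ) ∈ Δ := (inf_le_right : zmultiples (1:ℝ) ⊓ Δ ≤ Δ) hkH
  rw [ht] at hkΔ
  obtain ⟨s, hs⟩ := mem_zmul_iff.1 hkΔ
  have hst : (s : ℝ) * t = q' := by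
    have h1 : (s : ℝ) * ((t:ℝ) * ((k:ℝ)/(q':ℝ))) = k := hs
    field_simp at h1
    have h2 : ((s:ℝ) * t) * k = (q' : ℝ) * k := by linear_combination (k : ℝ) * h1
    exact mul_right_cancel₀ hk0' h2
  have hstz : s * (t : ℤ) = (q' : ℤ) := by exact_mod_cast hst
  have htq' : t ∣ q' := by
    have : (t : ℤ) ∣ (q' : ℤ) := ⟨s, by rw [← hstz]; ring⟩
    exact_mod_cast this
  have htm : t ≤ m := le_trans (Nat.le_of_dvd (Nat.pos_of_ne_zero hq'0) htq') hq'm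
  exact ⟨(k, q', t), ⟨hkm, hq'm, htm⟩, ht.symm⟩

/-! ### Counting coprime pairs -/

def Tset (m : ℕ) : Finset (ℕ × ℕ) :=
  (Finset.Icc 1 m ×ˢ Finset.Icc 1 m).filter fun z => z.1 * z.2 ≤ m

def Pset (m : ℕ) : Finset (ℕ × ℕ) :=
  (Tset m).filter fun z => Nat.Coprime z.1 z.2

lemma mem_Tset {m : ℕ} {z : ℕ × ℕ} :
    z ∈ Tset m ↔ (1 ≤ z.1 ∧ z.1 ≤ m) ∧ (1 ≤ z.2 ∧ z.2 ≤ m) ∧ z.1 * z.2 ≤ m := by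
  simp [Tset, Finset.mem_filter, Finset.mem_product, Finset.mem_Icc, and_assoc]

lemma card_Tset (m : ℕ) : (Tset m).card = ∑ p ∈ Finset.Icc 1 m, m / p := by
  have hT : Tset m = (Finset.Icc 1 m).biUnion
      (fun p => ({p} : Finset ℕ) ×ˢ Finset.Icc 1 (m / p)) := by
    ext ⟨p, q⟩
    simp only [mem_Tset, Finset.mem_biUnion, Finset.mem_Icc, Finset.mem_product,
      Finset.mem_singleton]
    constructor
    · rintro ⟨⟨hp1, hpm⟩, ⟨hq1, hqm⟩, hpq⟩
      refine ⟨p, ⟨hp1, hpm⟩, rfl, hq1, (Nat.le_div_iff_mul_le (by omega)).2 ?_⟩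
      rw [mul_comm]; exact hpq
    · rintro ⟨p', ⟨hp1, hpm⟩, rfl, hq1, hqd⟩
      have hqp : q * p ≤ m := (Nat.le_div_iff_mul_le (by omega)).1 hqd
      have hpq : p * q ≤ m := by rw [mul_comm]; exact hqp
      exact ⟨⟨hp1, hpm⟩, ⟨hq1, le_trans hqd (Nat.div_le_self m p)⟩, hpq⟩
  rw [hT, Finset.card_biUnion]
  · apply Finset.sum_congr rfl
    intro p hp
    rw [Finset.card_product, Finset.card_singleton, Nat.card_Icc]
    simp
  · intro a _ b _ hab
    simp only [Finset.disjoint_left]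
    rintro ⟨x, y⟩ hx hy
    simp only [Finset.mem_product, Finset.mem_singleton] at hx hy
    exact hab (hx.1.symm.trans hy.1)

lemma Tset_lower {m : ℕ} (hm : 1 ≤ m) :
    (m : ℝ) * Real.log m - m ≤ ((Tset m).card : ℝ) := by
  have h1 : ∀ p ∈ Finset.Icc 1 m, (m : ℝ) / p - 1 ≤ ((m / p : ℕ) : ℝ) := by
    intro p hp
    rw [Finset.mem_Icc] at hp
    have hp0 : 0 < p := hp.1
    have hlt : m < (m / p + 1) * p := by
      have h := Nat.div_add_mod m p
      have h2 := Nat.mod_lt m hp0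
      nlinarith
    have hlt' : (m : ℝ) < ((m / p : ℕ) + 1) * p := by exact_mod_cast hlt
    have hppos : (0:ℝ) < (p:ℝ) := by exact_mod_cast hp0
    have h6 : (m:ℝ)/p < ((m / p : ℕ) : ℝ) + 1 := by
      rw [div_lt_iff₀ hppos]; nlinarith [hlt']
    linarith
  have h2 : ((Tset m).card : ℝ) = ∑ p ∈ Finset.Icc 1 m, ((m / p : ℕ) : ℝ) := by
    rw [card_Tset]; push_cast; ring
  have h3 : ∑ p ∈ Finset.Icc 1 m, ((m : ℝ) / p - 1) ≤ ∑ p ∈ Finset.Icc 1 m, ((m / p : ℕ) : ℝ) :=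
    Finset.sum_le_sum h1
  have h4 : ∑ p ∈ Finset.Icc 1 m, ((m : ℝ) / p - 1) = (m : ℝ) * (harmonic m : ℝ) - m := by
    rw [Finset.sum_sub_distrib, harmonic_eq_sum_Icc]
    push_cast
    rw [Finset.mul_sum, Finset.sum_const, Nat.card_Icc]
    simp only [div_eq_mul_inv, nsmul_eq_mul, mul_one, Nat.add_sub_cancel]
  have h5 : Real.log m ≤ (harmonic m : ℝ) := by
    calc Real.log m ≤ Real.log (m + 1) := by
          apply Real.log_le_log (by exact_mod_cast hm)
          linarith
      _ ≤ (harmonic m : ℝ) := by exact_mod_cast log_add_one_le_harmonic m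
  have hm0 : (0:ℝ) ≤ (m:ℝ) := Nat.cast_nonneg m
  nlinarith [h2, h3, h4, h5]

lemma Tset_upper (x : ℕ) : ((Tset x).card : ℝ) ≤ (x : ℝ) * (1 + Real.log x) := by
  have h2 : ((Tset x).card : ℝ) = ∑ p ∈ Finset.Icc 1 x, ((x / p : ℕ) : ℝ) := by
    rw [card_Tset]; push_cast; ring
  have h1 : ∀ p ∈ Finset.Icc 1 x, ((x / p : ℕ) : ℝ) ≤ (x : ℝ) / p := fun p _ => Nat.cast_div_le
  have h3 : ∑ p ∈ Finset.Icc 1 x, ((x / p : ℕ) : ℝ) ≤ ∑ p ∈ Finset.Icc 1 x, (x : ℝ) / p :=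
    Finset.sum_le_sum h1
  have h4 : ∑ p ∈ Finset.Icc 1 x, (x : ℝ) / p = (x : ℝ) * (harmonic x : ℝ) := by
    rw [harmonic_eq_sum_Icc]
    push_cast
    rw [Finset.mul_sum]
    simp only [div_eq_mul_inv]
  have h5 : (harmonic x : ℝ) ≤ 1 + Real.log x := harmonic_le_one_add_log x
  have hx0 : (0:ℝ) ≤ (x:ℝ) := Nat.cast_nonneg x
  nlinarith [h2, h3, h4, h5]

lemma Tset_cover (m : ℕ) :
    Tset m ⊆ Pset m ∪ (Finset.Icc 2 m).biUnion
      (fun d => (Tset (m / (d * d))).image fun z => (z.1 * d, z.2 * d)) := by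
  rintro ⟨p, q⟩ hz
  rw [Finset.mem_union]
  by_cases hco : Nat.Coprime p q
  · exact Or.inl (Finset.mem_filter.2 ⟨hz, hco⟩)
  · right
    rw [mem_Tset] at hz
    obtain ⟨⟨hp1, hpm⟩, ⟨hq1, hqm⟩, hpq⟩ := hz
    set d := Nat.gcd p q with hd
    have hd2 : 2 ≤ d := by
      have hd1 : d ≠ 1 := fun h => hco h
      have hd0 : d ≠ 0 := by
        intro h
        have hp0 : p = 0 := Nat.eq_zero_of_gcd_eq_zero_left (by rw [← hd]; exact h)
        omega
      omega
    have hdp : d ∣ p := Nat.gcd_dvd_left p q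
    have hdq : d ∣ q := Nat.gcd_dvd_right p q
    have hdm : d ≤ m := le_trans (Nat.le_of_dvd (by omega) hdp) hpm
    rw [Finset.mem_biUnion]
    refine ⟨d, Finset.mem_Icc.2 ⟨hd2, hdm⟩, ?_⟩
    rw [Finset.mem_image]
    refine ⟨(p / d, q / d), ?_, ?_⟩
    · rw [mem_Tset]
      have hprod : (p / d) * (q / d) = (p * q) / (d * d) := Nat.div_mul_div_comm hdp hdq
      have hprodle : (p / d) * (q / d) ≤ m / (d * d) := by
        rw [hprod]; exact Nat.div_le_div_right hpq
      have hp1' : 1 ≤ p / d := Nat.one_le_div_iff (by omega) |>.2 (Nat.le_of_dvd (by omega) hdp)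
      have hq1' : 1 ≤ q / d := Nat.one_le_div_iff (by omega) |>.2 (Nat.le_of_dvd (by omega) hdq)
      refine ⟨⟨hp1', ?_⟩, ⟨hq1', ?_⟩, hprodle⟩
      · calc p / d ≤ (p / d) * (q / d) := Nat.le_mul_of_pos_right _ (by omega)
          _ ≤ m / (d * d) := hprodle
      · calc q / d ≤ (p / d) * (q / d) := Nat.le_mul_of_pos_left _ (by omega)
          _ ≤ m / (d * d) := hprodle
    · simp only [Prod.mk.injEq]
      exact ⟨Nat.div_mul_cancel hdp, Nat.div_mul_cancel hdq⟩

lemma card_T_le (m : ℕ) :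
    (Tset m).card ≤ (Pset m).card + ∑ d ∈ Finset.Icc 2 m, (Tset (m / (d * d))).card := by
  calc (Tset m).card ≤ (Pset m ∪ (Finset.Icc 2 m).biUnion
        (fun d => (Tset (m / (d * d))).image fun z => (z.1 * d, z.2 * d))).card :=
        Finset.card_le_card (Tset_cover m)
    _ ≤ (Pset m).card + ((Finset.Icc 2 m).biUnion
        (fun d => (Tset (m / (d * d))).image fun z => (z.1 * d, z.2 * d))).card :=
        Finset.card_union_le _ _
    _ ≤ (Pset m).card + ∑ d ∈ Finset.Icc 2 m, (Tset (m / (d * d))).card := by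
        refine Nat.add_le_add_left ?_ _
        refine le_trans Finset.card_biUnion_le ?_
        exact Finset.sum_le_sum fun d _ => Finset.card_image_le

lemma sum_inv_sq_aux : ∀ m : ℕ, 2 ≤ m →
    ∑ d ∈ Finset.Icc 2 m, (1:ℝ) / ((d:ℝ) * d) ≤ 3 / 4 - 1 / m := by
  intro m hm
  induction m, hm using Nat.le_induction with
  | base =>
    rw [Finset.Icc_self, Finset.sum_singleton]
    norm_num
  | succ n hn ih =>
    rw [Finset.sum_Icc_succ_top (by omega : 2 ≤ n + 1)]
    have h1 : (1:ℝ) / ((n+1 : ℕ) * (n+1 : ℕ)) ≤ 1 / n - 1 / (n+1 : ℕ) := by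
      have hn0 : (0:ℝ) < n := by exact_mod_cast (by omega : 0 < n)
      have hn1 : (0:ℝ) < (n:ℝ) + 1 := by linarith
      push_cast
      rw [div_sub_div _ _ (ne_of_gt hn0) (ne_of_gt hn1), div_le_div_iff₀ (by positivity) (by positivity)]
      ring_nf
      nlinarith
    push_cast at h1 ⊢
    linarith [ih]

lemma sum_inv_sq (m : ℕ) : ∑ d ∈ Finset.Icc 2 m, (1:ℝ) / ((d:ℝ) * d) ≤ 3 / 4 := by
  rcases Nat.lt_or_ge m 2 with h | h
  · have : Finset.Icc 2 m = ∅ := by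
      apply Finset.Icc_eq_empty; omega
    rw [this]; norm_num
  · have := sum_inv_sq_aux m h
    have hm0 : (0:ℝ) < m := by exact_mod_cast (by omega : 0 < m)
    have : (0:ℝ) ≤ 1 / m := by positivity
    linarith [sum_inv_sq_aux m h]

lemma count_lower {m : ℕ} (hm : 8192 ≤ m) :
    (1 / 20 : ℝ) * m * Real.log m ≤ ((Pset m).card : ℝ) := by
  have hm1 : 1 ≤ m := by omega
  have hm0 : (0:ℝ) < m := by exact_mod_cast (by omega : 0 < m)
  have hlog : (9:ℝ) ≤ Real.log m := by
    have h1 : Real.log 8192 ≤ Real.log m := by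
      apply Real.log_le_log (by norm_num)
      exact_mod_cast hm
    have h2 : Real.log (8192:ℝ) = 13 * Real.log 2 := by
      rw [show (8192:ℝ) = 2 ^ (13:ℕ) by norm_num, Real.log_pow]
      push_cast; ring
    have := Real.log_two_gt_d9
    nlinarith
  -- bound the error sum
  have herr : ∑ d ∈ Finset.Icc 2 m, ((Tset (m / (d * d))).card : ℝ) ≤
      (3/4 : ℝ) * m * (1 + Real.log m) := by
    have hstep : ∀ d ∈ Finset.Icc 2 m, ((Tset (m / (d * d))).card : ℝ) ≤
        ((1:ℝ) / ((d:ℝ) * d)) * (m * (1 + Real.log m)) := by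
      intro d hd
      rw [Finset.mem_Icc] at hd
      have hd0 : (0:ℝ) < (d:ℝ) := by exact_mod_cast (by omega : 0 < d)
      have h1 : ((Tset (m / (d * d))).card : ℝ) ≤ ((m / (d*d) : ℕ) : ℝ) * (1 + Real.log ((m / (d*d) : ℕ))) :=
        Tset_upper _
      have h2 : ((m / (d*d) : ℕ) : ℝ) ≤ (m : ℝ) / ((d:ℝ) * d) := by
        have := (Nat.cast_div_le : ((m / (d*d) : ℕ) : ℝ) ≤ (m:ℝ) / ((d*d : ℕ):ℝ))
        push_cast at this
        exact this
      have h3 : Real.log ((m / (d*d) : ℕ)) ≤ Real.log m := by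
        rcases Nat.eq_zero_or_pos (m / (d*d)) with h | h
        · rw [h]; simp only [Nat.cast_zero, Real.log_zero]
          exact Real.log_natCast_nonneg m
        · apply Real.log_le_log (by exact_mod_cast h)
          exact_mod_cast Nat.div_le_self m (d*d)
      have hlog1 : (0:ℝ) ≤ 1 + Real.log ((m / (d*d) : ℕ)) := by
        have := Real.log_natCast_nonneg (m / (d*d))
        linarith
      calc ((Tset (m / (d * d))).card : ℝ)
          ≤ ((m / (d*d) : ℕ) : ℝ) * (1 + Real.log ((m / (d*d) : ℕ))) := h1
        _ ≤ ((m : ℝ) / ((d:ℝ) * d)) * (1 + Real.log m) := by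
            apply mul_le_mul h2 (by linarith) hlog1 (by positivity)
        _ = ((1:ℝ) / ((d:ℝ) * d)) * (m * (1 + Real.log m)) := by ring
    calc ∑ d ∈ Finset.Icc 2 m, ((Tset (m / (d * d))).card : ℝ)
        ≤ ∑ d ∈ Finset.Icc 2 m, ((1:ℝ) / ((d:ℝ) * d)) * (m * (1 + Real.log m)) :=
          Finset.sum_le_sum hstep
      _ = (∑ d ∈ Finset.Icc 2 m, (1:ℝ) / ((d:ℝ) * d)) * (m * (1 + Real.log m)) := by
          rw [← Finset.sum_mul]
      _ ≤ (3/4 : ℝ) * (m * (1 + Real.log m)) := by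
          apply mul_le_mul_of_nonneg_right (sum_inv_sq m)
          have := Real.log_natCast_nonneg m
          positivity
      _ = (3/4 : ℝ) * m * (1 + Real.log m) := by ring
  have hcov : ((Tset m).card : ℝ) ≤ ((Pset m).card : ℝ) +
      ∑ d ∈ Finset.Icc 2 m, ((Tset (m / (d * d))).card : ℝ) := by
    have := card_T_le m
    push_cast
    exact_mod_cast this
  have hTlow := Tset_lower hm1
  nlinarith [hTlow, hcov, herr, hlog, hm0]

end CommGrowthAux


open CommGrowthAux in
/-- There is a constant `C > 0` such that for all `n ≥ 2`,
`n * (log n) ^ (log 2)` is at most `C` times the number of additive subgroups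
`Δ` of `ℝ` with `c(ℤ, Δ) ≤ ⌈C * n⌉`, where `ℤ = zmultiples 1`. -/
theorem commGrowth_int_lower_bound :
    ∃ C : ℝ, 0 < C ∧ ∀ n : ℕ, 2 ≤ n →
      (n : ℝ) * Real.log n ^ Real.log 2 ≤
        C * (Nat.card {Δ : AddSubgroup ℝ |
          addCommIndex (AddSubgroup.zmultiples (1 : ℝ)) Δ ≠ 0 ∧
          addCommIndex (AddSubgroup.zmultiples (1 : ℝ)) Δ ≤ ⌈C * n⌉₊} : ℝ) := by
  refine ⟨8192, by norm_num, ?_⟩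
  intro n hn
  have hn2 : (2:ℝ) ≤ (n:ℝ) := by exact_mod_cast hn
  have hn0 : (0:ℝ) < n := by linarith
  set m : ℕ := ⌈(8192:ℝ) * n⌉₊ with hmdef
  have hmreal : (8192:ℝ) * n ≤ (m:ℝ) := Nat.le_ceil _
  have hm8192 : 8192 ≤ m := by
    have h : (8192:ℝ) ≤ (m:ℝ) := by nlinarith
    exact_mod_cast h
  set S := {Δ : AddSubgroup ℝ |
      addCommIndex (AddSubgroup.zmultiples (1 : ℝ)) Δ ≠ 0 ∧
      addCommIndex (AddSubgroup.zmultiples (1 : ℝ)) Δ ≤ m} with hSdef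
  have hfin : S.Finite := setS_finite m
  -- the coprime pairs inject into S
  have hPS : ((Pset m).card : ℝ) ≤ (Nat.card S : ℝ) := by
    have hsub : (fun z : ℕ × ℕ => zmultiples ((z.1 : ℝ) / (z.2 : ℝ))) '' ↑(Pset m) ⊆ S := by
      rintro _ ⟨⟨p, q⟩, hz, rfl⟩
      have hz' := hz
      rw [Finset.mem_coe, Pset, Finset.mem_filter] at hz'
      obtain ⟨hT, hco⟩ := hz'
      rw [mem_Tset] at hT
      obtain ⟨⟨hp1, hpm⟩, ⟨hq1, hqm⟩, hpq⟩ := hT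
      have := addCommIndex_frac (p := p) (q := q) (by omega) (by omega) hco
      constructor
      · rw [this]; positivity
      · rw [this]; exact hpq
    have hinj : Set.InjOn (fun z : ℕ × ℕ => zmultiples ((z.1 : ℝ) / (z.2 : ℝ))) ↑(Pset m) := by
      rintro ⟨p, q⟩ hz ⟨p', q'⟩ hz' he
      rw [Finset.mem_coe, Pset, Finset.mem_filter, mem_Tset] at hz hz'
      obtain ⟨⟨⟨hp1, _⟩, ⟨hq1, _⟩, _⟩, hco⟩ := hz
      obtain ⟨⟨⟨hp1', _⟩, ⟨hq1', _⟩, _⟩, hco'⟩ := hz'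
      obtain ⟨h1, h2⟩ := frac_inj (by omega) (by omega) (by omega) (by omega) hco hco' he
      simp only [Prod.mk.injEq]
      exact ⟨h1, h2⟩
    have h1 : (Pset m).card ≤ Nat.card S := by
      calc (Pset m).card = (↑(Pset m) : Set (ℕ × ℕ)).ncard := (Set.ncard_coe_finset _).symm
        _ = ((fun z : ℕ × ℕ => zmultiples ((z.1 : ℝ) / (z.2 : ℝ))) '' ↑(Pset m)).ncard :=
            (Set.ncard_image_of_injOn hinj).symm
        _ ≤ S.ncard := Set.ncard_le_ncard hsub hfin
        _ = Nat.card S := (Nat.card_coe_set_eq S).symm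
    exact_mod_cast h1
  have hcount := count_lower hm8192
  -- logarithm estimates
  have hlog2 := Real.log_two_gt_d9
  have hlog2' := Real.log_two_lt_d9
  have hlogC : Real.log (8192:ℝ) = 13 * Real.log 2 := by
    rw [show (8192:ℝ) = 2 ^ (13:ℕ) by norm_num, Real.log_pow]
    push_cast; ring
  have hlogn0 : (0:ℝ) ≤ Real.log n := Real.log_natCast_nonneg n
  have hlogCn : Real.log ((8192:ℝ) * n) = Real.log 8192 + Real.log n :=
    Real.log_mul (by norm_num) (by positivity)
  have hlogCn9 : (9:ℝ) ≤ Real.log ((8192:ℝ) * n) := by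
    rw [hlogCn, hlogC]; nlinarith
  have hpow : Real.log n ^ Real.log 2 ≤ Real.log ((8192:ℝ) * n) := by
    rcases le_or_gt (Real.log n) 1 with h | h
    · have : Real.log n ^ Real.log 2 ≤ 1 :=
        Real.rpow_le_one hlogn0 h (Real.log_nonneg one_le_two)
      linarith
    · have h2 : Real.log n ^ Real.log 2 ≤ Real.log n := by
        nth_rewrite 2 [← Real.rpow_one (Real.log n)]
        exact Real.rpow_le_rpow_of_exponent_le (le_of_lt h) (by nlinarith)
      rw [hlogCn]
      have : (0:ℝ) ≤ Real.log (8192:ℝ) := by rw [hlogC]; nlinarith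
      linarith
  have hlogm : Real.log ((8192:ℝ) * n) ≤ Real.log m :=
    Real.log_le_log (by positivity) hmreal
  -- final chain
  have hchain : (n:ℝ) * Real.log ((8192:ℝ) * n) ≤
      8192 * ((1/20 : ℝ) * m * Real.log m) := by
    have hmn : (m:ℝ) * Real.log m ≥ ((8192:ℝ) * n) * Real.log ((8192:ℝ) * n) := by
      apply mul_le_mul hmreal hlogm (by linarith) (by positivity)
    nlinarith [hlogCn9, hn0, hmn]
  calc (n : ℝ) * Real.log n ^ Real.log 2
      ≤ (n : ℝ) * Real.log ((8192:ℝ) * n) := by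
        apply mul_le_mul_of_nonneg_left hpow (le_of_lt hn0)
    _ ≤ 8192 * ((1/20 : ℝ) * m * Real.log m) := hchain
    _ ≤ 8192 * ((Pset m).card : ℝ) := by linarith [hcount]
    _ ≤ 8192 * (Nat.card S : ℝ) := by linarith [hPS]
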